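/- Let v, w : ℝ × ℝ → ℝ be C³ and λ ∈ ℝ. Define M = [[-λ + v/2, 1],[-2w-2, λ - v/2]] and N = [[2λ² + (v_x - v²)/2, -2λ - v],[4(1+w)λ + 2w_x + 2v(1+w), -2λ² - (v_x - v²)/2]]. Then the zero curvature equation M_t - N_x + M·N - N·M = 0 holds if and only if v and w satisfy the gBK equations v_t = v_xx - 2v·v_x - 4w_x and w_t = -w_xx - 2(wv)_x - 2v_x. -/

import Mathlib

open Matrix

/-- Partial derivative in the first (spatial) variable. -/
noncomputable def px (f : ℝ × ℝ → ℝ) (p : ℝ × ℝ) : ℝ :=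
  deriv (fun x => f (x, p.2)) p.1

/-- Partial derivative in the second (temporal) variable. -/
noncomputable def pt (f : ℝ × ℝ → ℝ) (p : ℝ × ℝ) : ℝ :=
  deriv (fun t => f (p.1, t)) p.2

/-- The spatial Lax matrix of the classical gBK equation. -/
noncomputable def Mgbk (v w : ℝ × ℝ → ℝ) (l : ℝ) (p : ℝ × ℝ) :
    Matrix (Fin 2) (Fin 2) ℝ :=
  !![-l + v p / 2, 1; -2 * w p - 2, l - v p / 2]

/-- The temporal Lax matrix `N^{(2)}` of the classical gBK equation. -/
noncomputable def Ngbk (v w : ℝ × ℝ → ℝ) (l : ℝ) (p : ℝ × ℝ) :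
    Matrix (Fin 2) (Fin 2) ℝ :=
  !![2 * l^2 + (px v p - (v p)^2) / 2, -2 * l - v p;
     4 * (1 + w p) * l + 2 * px w p + 2 * v p * (1 + w p),
     -(2 * l^2) - (px v p - (v p)^2) / 2]

private lemma hasDerivAt_px (f : ℝ × ℝ → ℝ) (hf : Differentiable ℝ f) (p : ℝ × ℝ) :
    HasDerivAt (fun x => f (x, p.2)) (px f p) p.1 := by
  have h : DifferentiableAt ℝ (fun x => f (x, p.2)) p.1 :=
    (hf (p.1, p.2)).comp p.1 (differentiableAt_id.prodMk (differentiableAt_const _))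
  exact h.hasDerivAt

private lemma hasDerivAt_pt (f : ℝ × ℝ → ℝ) (hf : Differentiable ℝ f) (p : ℝ × ℝ) :
    HasDerivAt (fun t => f (p.1, t)) (pt f p) p.2 := by
  have h : DifferentiableAt ℝ (fun t => f (p.1, t)) p.2 :=
    (hf (p.1, p.2)).comp p.2 ((differentiableAt_const _).prodMk differentiableAt_id)
  exact h.hasDerivAt

private lemma contDiff_px (f : ℝ × ℝ → ℝ) (hf : ContDiff ℝ 3 f) :
    ContDiff ℝ 2 (px f) := by
  have h1 : ContDiff ℝ 2 (fun q : ℝ × ℝ => fderiv ℝ f q ((1 : ℝ), (0 : ℝ))) :=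
    (hf.fderiv_right (by norm_num)).clm_apply contDiff_const
  have h2 : px f = fun q : ℝ × ℝ => fderiv ℝ f q ((1 : ℝ), (0 : ℝ)) := by
    funext q
    have hd : HasDerivAt (fun x : ℝ => (x, q.2)) (((1 : ℝ), (0 : ℝ))) q.1 :=
      (hasDerivAt_id q.1).prodMk (hasDerivAt_const _ _)
    have h3 := (hf.differentiable (by norm_num) q).hasFDerivAt.comp_hasDerivAt q.1 hd
    exact h3.deriv
  rw [h2]; exact h1

theorem gBK_zero_curvature_iff
    (v w : ℝ × ℝ → ℝ) (hv : ContDiff ℝ 3 v) (hw : ContDiff ℝ 3 w) :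
    (∀ (l : ℝ) (p : ℝ × ℝ) (i j : Fin 2),
      pt (fun q => Mgbk v w l q i j) p - px (fun q => Ngbk v w l q i j) p
        + (Mgbk v w l p * Ngbk v w l p - Ngbk v w l p * Mgbk v w l p) i j = 0)
    ↔
    (∀ p : ℝ × ℝ,
      pt v p = px (px v) p - 2 * v p * px v p - 4 * px w p ∧
      pt w p = -(px (px w) p) - 2 * px (fun q => w q * v q) p - 2 * px v p) := by
  have hv' : Differentiable ℝ v := hv.differentiable (by norm_num)
  have hw' : Differentiable ℝ w := hw.differentiable (by norm_num)
  have hpxv : Differentiable ℝ (px v) := (contDiff_px v hv).differentiable (by norm_num)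
  have hpxw : Differentiable ℝ (px w) := (contDiff_px w hw).differentiable (by norm_num)
  -- time derivatives of M entries
  have HMt00 : ∀ (l : ℝ) (p : ℝ × ℝ),
      pt (fun q => Mgbk v w l q 0 0) p = pt v p / 2 := by
    intro l p
    have h : (fun q : ℝ × ℝ => Mgbk v w l q 0 0) = fun q => -l + v q / 2 := by
      funext q; simp [Mgbk]
    rw [h]
    exact (((hasDerivAt_pt v hv' p).div_const 2).const_add (-l)).deriv
  have HMt01 : ∀ (l : ℝ) (p : ℝ × ℝ),
      pt (fun q => Mgbk v w l q 0 1) p = 0 := by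
    intro l p
    have h : (fun q : ℝ × ℝ => Mgbk v w l q 0 1) = fun _ => (1 : ℝ) := by
      funext q; simp [Mgbk]
    rw [h]
    exact deriv_const _ _
  have HMt10 : ∀ (l : ℝ) (p : ℝ × ℝ),
      pt (fun q => Mgbk v w l q 1 0) p = -2 * pt w p := by
    intro l p
    have h : (fun q : ℝ × ℝ => Mgbk v w l q 1 0) = fun q => -2 * w q - 2 := by
      funext q; simp [Mgbk]
    rw [h]
    exact (((hasDerivAt_pt w hw' p).const_mul (-2)).sub_const 2).deriv
  have HMt11 : ∀ (l : ℝ) (p : ℝ × ℝ),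
      pt (fun q => Mgbk v w l q 1 1) p = -(pt v p / 2) := by
    intro l p
    have h : (fun q : ℝ × ℝ => Mgbk v w l q 1 1) = fun q => l - v q / 2 := by
      funext q; simp [Mgbk]
    rw [h]
    exact (((hasDerivAt_pt v hv' p).div_const 2).const_sub l).deriv
  -- space derivatives of N entries
  have HNx00 : ∀ (l : ℝ) (p : ℝ × ℝ),
      px (fun q => Ngbk v w l q 0 0) p = (px (px v) p - 2 * v p * px v p) / 2 := by
    intro l p
    have h : (fun q : ℝ × ℝ => Ngbk v w l q 0 0)
        = fun q => 2 * l ^ 2 + (px v q - v q ^ 2) / 2 := by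
      funext q; simp [Ngbk]
    rw [h]
    have hd : HasDerivAt (fun x : ℝ => 2 * l ^ 2 + (px v (x, p.2) - v (x, p.2) ^ 2) / 2)
        ((px (px v) p - 2 * v p * px v p) / 2) p.1 := by
      have := (((hasDerivAt_px (px v) hpxv p).sub
        ((hasDerivAt_px v hv' p).pow 2)).div_const 2).const_add (2 * l ^ 2)
      refine this.congr_deriv ?_
      ring
    exact hd.deriv
  have HNx01 : ∀ (l : ℝ) (p : ℝ × ℝ),
      px (fun q => Ngbk v w l q 0 1) p = -(px v p) := by
    intro l p
    have h : (fun q : ℝ × ℝ => Ngbk v w l q 0 1) = fun q => -2 * l - v q := by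
      funext q; simp [Ngbk]
    rw [h]
    exact ((hasDerivAt_px v hv' p).const_sub (-2 * l)).deriv
  have HNx10 : ∀ (l : ℝ) (p : ℝ × ℝ),
      px (fun q => Ngbk v w l q 1 0) p
        = 4 * px w p * l + 2 * px (px w) p
          + (2 * px v p * (1 + w p) + 2 * v p * px w p) := by
    intro l p
    have h : (fun q : ℝ × ℝ => Ngbk v w l q 1 0)
        = fun q => 4 * (1 + w q) * l + 2 * px w q + 2 * v q * (1 + w q) := by
      funext q; simp [Ngbk]
    rw [h]
    have t1 : HasDerivAt (fun x : ℝ => 4 * (1 + w (x, p.2)) * l) (4 * px w p * l) p.1 :=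
      (((hasDerivAt_px w hw' p).const_add 1).const_mul 4).mul_const l
    have t2 : HasDerivAt (fun x : ℝ => 2 * px w (x, p.2)) (2 * px (px w) p) p.1 :=
      (hasDerivAt_px (px w) hpxw p).const_mul 2
    have t3 : HasDerivAt (fun x : ℝ => 2 * v (x, p.2) * (1 + w (x, p.2)))
        (2 * px v p * (1 + w p) + 2 * v p * px w p) p.1 :=
      ((hasDerivAt_px v hv' p).const_mul 2).mul ((hasDerivAt_px w hw' p).const_add 1)
    exact ((t1.add t2).add t3).deriv
  have HNx11 : ∀ (l : ℝ) (p : ℝ × ℝ),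
      px (fun q => Ngbk v w l q 1 1) p = -((px (px v) p - 2 * v p * px v p) / 2) := by
    intro l p
    have h : (fun q : ℝ × ℝ => Ngbk v w l q 1 1)
        = fun q => -(2 * l ^ 2) - (px v q - v q ^ 2) / 2 := by
      funext q; simp [Ngbk]
    rw [h]
    have hd : HasDerivAt (fun x : ℝ => -(2 * l ^ 2) - (px v (x, p.2) - v (x, p.2) ^ 2) / 2)
        (-((px (px v) p - 2 * v p * px v p) / 2)) p.1 := by
      have := (((hasDerivAt_px (px v) hpxv p).sub
        ((hasDerivAt_px v hv' p).pow 2)).div_const 2).const_sub (-(2 * l ^ 2))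
      refine this.congr_deriv ?_
      ring
    exact hd.deriv
  have Cwv : ∀ p : ℝ × ℝ,
      px (fun q => w q * v q) p = px w p * v p + w p * px v p := by
    intro p
    exact ((hasDerivAt_px w hw' p).mul (hasDerivAt_px v hv' p)).deriv
  constructor
  · intro h p
    have h00 := h 0 p 0 0
    have h10 := h 0 p 1 0
    rw [HMt00, HNx00] at h00
    rw [HMt10, HNx10] at h10
    rw [Cwv p]
    simp only [Mgbk, Ngbk, Matrix.sub_apply, Matrix.mul_apply, Fin.sum_univ_two,
      Matrix.of_apply, Matrix.cons_val', Matrix.cons_val_zero, Matrix.cons_val_one,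
      Matrix.head_cons, Matrix.head_fin_const, Matrix.empty_val',
      Matrix.cons_val_fin_one] at h00 h10
    constructor
    · linear_combination 2 * h00
    · linear_combination (-1 / 2 : ℝ) * h10
  · intro h l p i j
    obtain ⟨h1, h2⟩ := h p
    rw [Cwv p] at h2
    have hi : i = 0 ∨ i = 1 := by omega
    have hj : j = 0 ∨ j = 1 := by omega
    rcases hi with rfl | rfl <;> rcases hj with rfl | rfl
    · rw [HMt00, HNx00]
      simp only [Mgbk, Ngbk, Matrix.sub_apply, Matrix.mul_apply, Fin.sum_univ_two,
        Matrix.of_apply, Matrix.cons_val', Matrix.cons_val_zero, Matrix.cons_val_one,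
        Matrix.head_cons, Matrix.head_fin_const, Matrix.empty_val', Matrix.cons_val_fin_one]
      linear_combination h1 / 2
    · rw [HMt01, HNx01]
      simp only [Mgbk, Ngbk, Matrix.sub_apply, Matrix.mul_apply, Fin.sum_univ_two,
        Matrix.of_apply, Matrix.cons_val', Matrix.cons_val_zero, Matrix.cons_val_one,
        Matrix.head_cons, Matrix.head_fin_const, Matrix.empty_val', Matrix.cons_val_fin_one]
      ring
    · rw [HMt10, HNx10]
      simp only [Mgbk, Ngbk, Matrix.sub_apply, Matrix.mul_apply, Fin.sum_univ_two,
        Matrix.of_apply, Matrix.cons_val', Matrix.cons_val_zero, Matrix.cons_val_one,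
        Matrix.head_cons, Matrix.head_fin_const, Matrix.empty_val', Matrix.cons_val_fin_one]
      linear_combination (-2 : ℝ) * h2
    · rw [HMt11, HNx11]
      simp only [Mgbk, Ngbk, Matrix.sub_apply, Matrix.mul_apply, Fin.sum_univ_two,
        Matrix.of_apply, Matrix.cons_val', Matrix.cons_val_zero, Matrix.cons_val_one,
        Matrix.head_cons, Matrix.head_fin_const, Matrix.empty_val', Matrix.cons_val_fin_one]
      linear_combination (-1 / 2 : ℝ) * h1
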